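/- Let a and b be positive integers with a < b. The group Z_{2^a} ⊕ Z_{2^b} admits no fixed-point-free automorphism; that is, every automorphism of Z_{2^a} ⊕ Z_{2^b} fixes some non-identity element. -/

import Mathlib

/-- In `ZMod (2^b)`, the only 2-torsion elements are `0` and `2^(b-1)`. -/
lemma zmod_two_pow_two_torsion (b : ℕ) (hb : 0 < b) (x : ZMod (2 ^ b))
    (hx : 2 * x = 0) : x = 0 ∨ x = ((2 ^ (b - 1) : ℕ) : ZMod (2 ^ b)) := by
  haveI : NeZero (2 ^ b) := ⟨pow_ne_zero _ two_ne_zero⟩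
  have hxval : ((x.val : ℕ) : ZMod (2 ^ b)) = x := ZMod.natCast_rightInverse x
  have hcast : ((2 * x.val : ℕ) : ZMod (2 ^ b)) = 0 := by
    push_cast
    rw [hxval, hx]
  have hdvd : (2 ^ b : ℕ) ∣ 2 * x.val :=
    (ZMod.natCast_eq_zero_iff _ _).mp hcast
  have hb' : (2 : ℕ) ^ b = 2 * 2 ^ (b - 1) := by
    rw [← pow_succ' 2 (b - 1), Nat.sub_add_cancel hb]
  obtain ⟨k, hk⟩ := hdvd
  have hk2 : 2 * x.val = 2 * (2 ^ (b - 1) * k) := by rw [hk, hb']; ring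
  have hk' : x.val = 2 ^ (b - 1) * k := Nat.eq_of_mul_eq_mul_left (by norm_num) hk2
  have hlt' : 2 ^ (b - 1) * k < 2 * 2 ^ (b - 1) := by
    rw [← hb', ← hk']; exact ZMod.val_lt x
  have hklt : k < 2 := by
    by_contra hge
    push_neg at hge
    have := Nat.mul_le_mul_left (2 ^ (b - 1)) hge
    omega
  interval_cases k
  · left
    rw [← hxval, hk']
    simp
  · right
    rw [← hxval, hk']
    simp

theorem no_fpf_automorphism_zmod_two_pow (a b : ℕ) (ha : 0 < a) (hab : a < b)
    (f : AddAut (ZMod (2 ^ a) × ZMod (2 ^ b))) :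
    ∃ g : ZMod (2 ^ a) × ZMod (2 ^ b), g ≠ 0 ∧ f g = g := by
  haveI : NeZero ((2 : ℕ) ^ b) := ⟨pow_ne_zero _ two_ne_zero⟩
  haveI : NeZero ((2 : ℕ) ^ a) := ⟨pow_ne_zero _ two_ne_zero⟩
  set g2 : ZMod (2 ^ b) := ((2 ^ (b - 1) : ℕ) : ZMod (2 ^ b)) with hg2
  set g : ZMod (2 ^ a) × ZMod (2 ^ b) := (0, g2) with hg
  have hb : 0 < b := lt_trans ha hab
  -- g ≠ 0
  have hg2ne : g2 ≠ 0 := by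
    intro h
    rw [hg2] at h
    have hd := (ZMod.natCast_eq_zero_iff (2 ^ (b - 1)) (2 ^ b)).mp h
    have hle : (2:ℕ) ^ b ≤ 2 ^ (b - 1) :=
      Nat.le_of_dvd (Nat.pow_pos (by norm_num)) hd
    have h2 : (2:ℕ) ^ (b-1) < 2 ^ b := Nat.pow_lt_pow_right (by norm_num) (by omega)
    omega
  have hgne : g ≠ 0 := by
    intro h
    apply hg2ne
    have := congrArg Prod.snd h
    simpa [hg] using this
  refine ⟨g, hgne, ?_⟩
  -- g = 2^a • h
  set h : ZMod (2 ^ a) × ZMod (2 ^ b) := (0, ((2 ^ (b - 1 - a) : ℕ) : ZMod (2 ^ b))) with hh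
  have hgh : g = (2 ^ a : ℕ) • h := by
    rw [hg, hh, Prod.smul_mk, smul_zero]
    congr 1
    rw [hg2, nsmul_eq_mul]
    push_cast
    rw [← pow_add]
    congr 1
    omega
  -- 2 • g = 0
  have h2g : (2 : ℕ) • g = 0 := by
    rw [hg, Prod.smul_mk, smul_zero]
    have hz : (2 : ℕ) • g2 = 0 := by
      rw [nsmul_eq_mul, hg2]
      push_cast
      rw [← pow_succ']
      have hbb : b - 1 + 1 = b := by omega
      rw [hbb]
      exact_mod_cast ZMod.natCast_self (2 ^ b)
    rw [hz]
    rfl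
  -- first coordinate of f g is 0
  have hfst : (f g).1 = 0 := by
    have hmap : f g = (2 ^ a : ℕ) • f h := by rw [hgh, map_nsmul]
    have h1 : (f g).1 = (2 ^ a : ℕ) • (f h).1 := by rw [hmap]; rfl
    rw [h1, nsmul_eq_mul]
    have hz : ((2 ^ a : ℕ) : ZMod (2 ^ a)) = 0 := ZMod.natCast_self (2 ^ a)
    rw [hz, zero_mul]
  -- 2-torsion of second coordinate
  have h2fg : (2 : ℕ) • f g = 0 := by rw [← map_nsmul, h2g, map_zero]
  have hsnd : 2 * (f g).2 = 0 := by
    have := congrArg Prod.snd h2fg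
    simpa [nsmul_eq_mul] using this
  rcases zmod_two_pow_two_torsion b hb (f g).2 hsnd with h0 | h1
  · exfalso
    apply hgne
    have hfg0 : f g = 0 := by
      ext
      · exact hfst
      · exact h0
    exact f.injective (by rw [hfg0, map_zero] : f g = f 0)
  · ext
    · simpa [hg] using hfst
    · simpa [hg, hg2] using h1
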